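/- arXiv:2310.14306 — 2 statements merged into one kernel-verified Lean document; each statement's English description precedes it below -/
import Mathlib

section
/- Let p ≥ 3 be an odd natural number, let M > 0, K, L be real numbers, set b = −K/(2M) and a = L/M − K²/(4M²), and assume a > 0. Then ∫_{−∞}^{∞} e^{−½M(z² + (K/M)z + L/M)} z^{p−1} dz = a · e^{−½Ma} · Σ_{j=0}^{(p−1)/2} C(p−1, p−1−2j) · a^{2j} · b^{p−1−2j} · (½Ma²)^{−(½+j)} · Γ(j + ½), where C(n,k) is the binomial coefficient and Γ is the Gamma function. -/
open Finset MeasureTheory Real Set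

lemma gauss_pow_integrable {c : ℝ} (hc : 0 < c) (n : ℕ) :
    Integrable fun x : ℝ => x ^ n * Real.exp (-c * x ^ 2) := by
  have h := integrable_rpow_mul_exp_neg_mul_sq hc
    (s := (n : ℝ)) (lt_of_lt_of_le neg_one_lt_zero (Nat.cast_nonneg n))
  simpa [Real.rpow_natCast] using h

lemma gauss_moment_odd (c : ℝ) {k : ℕ} (hk : Odd k) :
    ∫ x : ℝ, x ^ k * Real.exp (-c * x ^ 2) = 0 := by
  have h : ∫ x : ℝ, (fun y : ℝ => y ^ k * Real.exp (-c * y ^ 2)) (-x)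
      = ∫ x : ℝ, x ^ k * Real.exp (-c * x ^ 2) := by
    exact integral_neg_eq_self (fun y : ℝ => y ^ k * Real.exp (-c * y ^ 2)) volume
  have h2 : ∀ x : ℝ, (-x) ^ k * Real.exp (-c * (-x) ^ 2)
      = -(x ^ k * Real.exp (-c * x ^ 2)) := by
    intro x; rw [hk.neg_pow, neg_sq]; ring
  simp only [h2, integral_neg] at h
  linarith

lemma gauss_moment_even {c : ℝ} (hc : 0 < c) (j : ℕ) :
    ∫ x : ℝ, x ^ (2 * j) * Real.exp (-c * x ^ 2)
      = c ^ (-(1 / 2 + (j : ℝ))) * Real.Gamma ((j : ℝ) + 1 / 2) := by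
  have hq : (-1 : ℝ) < ((2 * j : ℕ) : ℝ) :=
    lt_of_lt_of_le neg_one_lt_zero (Nat.cast_nonneg _)
  have h := integral_rpow_mul_exp_neg_mul_rpow (p := 2) (q := ((2 * j : ℕ) : ℝ)) (b := c)
      two_pos hq hc
  have h2 : ∫ x in Ioi (0 : ℝ), x ^ (2 * j) * Real.exp (-c * x ^ 2)
      = c ^ (-(((2 * j : ℕ) : ℝ) + 1) / 2) * (1 / 2)
          * Real.Gamma ((((2 * j : ℕ) : ℝ) + 1) / 2) := by
    rw [← h]
    refine setIntegral_congr_fun measurableSet_Ioi (fun x _ => ?_)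
    rw [Real.rpow_natCast, show (2 : ℝ) = ((2 : ℕ) : ℝ) by norm_num, Real.rpow_natCast]
  have habs : (∫ x : ℝ, x ^ (2 * j) * Real.exp (-c * x ^ 2))
      = 2 * ∫ x in Ioi (0 : ℝ), x ^ (2 * j) * Real.exp (-c * x ^ 2) := by
    rw [← integral_comp_abs (f := fun x : ℝ => x ^ (2 * j) * Real.exp (-c * x ^ 2))]
    congr 1
    ext x
    rw [pow_mul, pow_mul, sq_abs]
  rw [habs, h2]
  push_cast
  rw [show -(2 * (j : ℝ) + 1) / 2 = -(1 / 2 + (j : ℝ)) by ring,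
    show (2 * (j : ℝ) + 1) / 2 = (j : ℝ) + 1 / 2 by ring]
  ring

/-- Odd-`p` normal-ratio density integral: for odd `p ≥ 3`, `M > 0`,
`b = -K/(2M)`, `a = L/M - K²/(4M²) > 0`,
`∫ e^{-½M(z² + (K/M)z + L/M)} z^{p-1} dz
  = a e^{-½Ma} Σ_{j=0}^{(p-1)/2} C(p-1, p-1-2j) a^{2j} b^{p-1-2j}
      (½Ma²)^{-(½+j)} Γ(j + ½)`. -/
theorem normal_ratio_density_odd (p : ℕ) (hp : 3 ≤ p) (hodd : Odd p)
    (M K L b a : ℝ) (hM : 0 < M)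
    (hb : b = -K / (2 * M)) (ha : a = L / M - K ^ 2 / (4 * M ^ 2)) (ha' : 0 < a) :
    ∫ z : ℝ, Real.exp (-(1 / 2) * M * (z ^ 2 + (K / M) * z + L / M)) * z ^ (p - 1) =
      a * Real.exp (-(1 / 2) * M * a) *
        ∑ j ∈ Finset.range ((p - 1) / 2 + 1),
          (Nat.choose (p - 1) (p - 1 - 2 * j) : ℝ) * a ^ (2 * j) * b ^ (p - 1 - 2 * j) *
            ((1 / 2) * M * a ^ 2) ^ (-(1 / 2 + (j : ℝ))) * Real.Gamma ((j : ℝ) + 1 / 2) := by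
  obtain ⟨m, hm⟩ := hodd
  have hn : p - 1 = 2 * m := by omega
  have hh : (p - 1) / 2 = m := by omega
  set c : ℝ := 1 / 2 * M with hcdef
  have hc : 0 < c := by positivity
  have hM' : M ≠ 0 := ne_of_gt hM
  -- complete the square in the exponent
  have hA : ∀ z : ℝ, Real.exp (-(1 / 2) * M * (z ^ 2 + (K / M) * z + L / M))
      = Real.exp (-(1 / 2) * M * a) * (Real.exp (-c * (z - b) ^ 2)) := by
    intro z
    rw [← Real.exp_add]
    congr 1
    rw [hcdef, hb, ha]
    field_simp
    ring
  have step1 : (∫ z : ℝ, Real.exp (-(1 / 2) * M * (z ^ 2 + (K / M) * z + L / M)) * z ^ (p - 1))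
      = Real.exp (-(1 / 2) * M * a) * ∫ z : ℝ, Real.exp (-c * (z - b) ^ 2) * z ^ (p - 1) := by
    rw [← integral_const_mul]
    congr 1
    ext z
    rw [hA z]
    ring
  have step2 : (∫ z : ℝ, Real.exp (-c * (z - b) ^ 2) * z ^ (p - 1))
      = ∫ u : ℝ, Real.exp (-c * u ^ 2) * (u + b) ^ (p - 1) := by
    have := integral_add_right_eq_self
      (μ := volume) (fun z : ℝ => Real.exp (-c * (z - b) ^ 2) * z ^ (p - 1)) b
    rw [← this]
    congr 1
    ext u
    rw [add_sub_cancel_right]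
  have step3 : (∫ u : ℝ, Real.exp (-c * u ^ 2) * (u + b) ^ (p - 1))
      = ∑ k ∈ Finset.range (p - 1 + 1),
          (Nat.choose (p - 1) k : ℝ) * b ^ (p - 1 - k)
            * ∫ u : ℝ, u ^ k * Real.exp (-c * u ^ 2) := by
    have hfun : ∀ u : ℝ, Real.exp (-c * u ^ 2) * (u + b) ^ (p - 1)
        = ∑ k ∈ Finset.range (p - 1 + 1),
            (Nat.choose (p - 1) k : ℝ) * b ^ (p - 1 - k)
              * (u ^ k * Real.exp (-c * u ^ 2)) := by
      intro u
      rw [add_pow, Finset.mul_sum]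
      exact Finset.sum_congr rfl fun k _ => by ring
    simp_rw [hfun]
    rw [integral_finset_sum _ (fun k _ => ((gauss_pow_integrable hc k).const_mul _))]
    exact Finset.sum_congr rfl fun k _ => integral_const_mul _ _
  -- drop the odd terms and reindex
  have step4 : (∑ k ∈ Finset.range (p - 1 + 1),
        (Nat.choose (p - 1) k : ℝ) * b ^ (p - 1 - k)
          * ∫ u : ℝ, u ^ k * Real.exp (-c * u ^ 2))
      = ∑ j ∈ Finset.range (m + 1),
          (Nat.choose (p - 1) (2 * j) : ℝ) * b ^ (p - 1 - 2 * j)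
            * (c ^ (-(1 / 2 + (j : ℝ))) * Real.Gamma ((j : ℝ) + 1 / 2)) := by
    rw [← Finset.sum_filter_of_ne (p := fun k => Even k)
      (fun k _ hne => by
        by_contra hodd
        rw [gauss_moment_odd c (Nat.not_even_iff_odd.mp hodd)] at hne
        simp at hne)]
    refine Finset.sum_nbij' (fun k => k / 2) (fun j => 2 * j) ?_ ?_ ?_ ?_ ?_
    · intro k hk
      simp only [Finset.mem_filter, Finset.mem_range] at hk ⊢
      obtain ⟨hk1, r, hr⟩ := hk
      omega
    · intro j hj
      simp only [Finset.mem_filter, Finset.mem_range] at hj ⊢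
      exact ⟨by omega, even_two_mul j⟩
    · intro k hk
      simp only [Finset.mem_filter, Finset.mem_range] at hk
      obtain ⟨hk1, r, hr⟩ := hk
      omega
    · intro j hj
      omega
    · intro k hk
      simp only [Finset.mem_filter, Finset.mem_range] at hk
      obtain ⟨hk1, r, hr⟩ := hk
      have hkr : k = 2 * r := by omega
      subst hkr
      rw [Nat.mul_div_cancel_left r (by norm_num : 0 < 2), gauss_moment_even hc r]
  rw [step1, step2, step3, step4, hh]
  rw [Finset.mul_sum, Finset.mul_sum]
  refine Finset.sum_congr rfl fun j hj => ?_
  simp only [Finset.mem_range] at hj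
  have hle : 2 * j ≤ p - 1 := by omega
  have hchoose : (Nat.choose (p - 1) (p - 1 - 2 * j) : ℝ) = (Nat.choose (p - 1) (2 * j) : ℝ) := by
    rw [Nat.choose_symm hle]
  have key : a * a ^ (2 * j) * (c * a ^ 2) ^ (-(1 / 2 + (j : ℝ))) = c ^ (-(1 / 2 + (j : ℝ))) := by
    have h1 : (c * a ^ 2) ^ (-(1 / 2 + (j : ℝ)))
        = c ^ (-(1 / 2 + (j : ℝ))) * a ^ ((2 : ℝ) * (-(1 / 2 + (j : ℝ)))) := by
      rw [Real.mul_rpow hc.le (by positivity), ← Real.rpow_natCast a 2,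
        ← Real.rpow_mul ha'.le]
      norm_num
    have h2 : a * a ^ (2 * j)
        * (c ^ (-(1 / 2 + (j : ℝ))) * a ^ ((2 : ℝ) * (-(1 / 2 + (j : ℝ)))))
        = c ^ (-(1 / 2 + (j : ℝ)))
          * (a ^ (1 : ℝ) * a ^ (((2 * j : ℕ)) : ℝ) * a ^ ((2 : ℝ) * (-(1 / 2 + (j : ℝ))))) := by
      rw [Real.rpow_one, Real.rpow_natCast]
      ring
    rw [h1, h2, ← Real.rpow_add ha', ← Real.rpow_add ha',
      show (1 : ℝ) + ((2 * j : ℕ) : ℝ) + (2 : ℝ) * (-(1 / 2 + (j : ℝ))) = 0 by push_cast; ring,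
      Real.rpow_zero, mul_one]
  calc Real.exp (-(1 / 2) * M * a)
        * ((Nat.choose (p - 1) (2 * j) : ℝ) * b ^ (p - 1 - 2 * j)
          * (c ^ (-(1 / 2 + (j : ℝ))) * Real.Gamma ((j : ℝ) + 1 / 2)))
      = Real.exp (-(1 / 2) * M * a)
        * ((Nat.choose (p - 1) (2 * j) : ℝ) * b ^ (p - 1 - 2 * j)
          * ((a * a ^ (2 * j) * (c * a ^ 2) ^ (-(1 / 2 + (j : ℝ))))
            * Real.Gamma ((j : ℝ) + 1 / 2))) := by rw [key]
    _ = a * Real.exp (-(1 / 2) * M * a)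
        * ((Nat.choose (p - 1) (p - 1 - 2 * j) : ℝ) * a ^ (2 * j) * b ^ (p - 1 - 2 * j)
          * (c * a ^ 2) ^ (-(1 / 2 + (j : ℝ))) * Real.Gamma ((j : ℝ) + 1 / 2)) := by
        rw [hchoose]; ring
end

section
/- Let p ≥ 2 be an even natural number, let M > 0, K, L be real numbers, set b = −K/(2M) and a = L/M − K²/(4M²), and assume a > 0 and b > 0. Then ∫_{−∞}^{∞} e^{−½M(z² + (K/M)z + L/M)} |z|^{p−1} dz = 2 a e^{−½Ma} · [ Σ_{i=1}^{p/2} C(p−1, p−2i) · a^{2i−1} · b^{p−2i} · ∫_{b/a}^{∞} e^{−½Ma²u²} u^{2i−1} du + Σ_{i=0}^{(p−2)/2} C(p−1, p−2i−1) · a^{2i} · b^{p−1−2i} · ∫_{0}^{b/a} e^{−½Ma²u²} u^{2i} du ]. -/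
open MeasureTheory intervalIntegral Finset

open Filter Asymptotics Real Set in
lemma integrable_gauss_pow {c : ℝ} (hc : 0 < c) (n : ℕ) :
    MeasureTheory.Integrable (fun u : ℝ => Real.exp (-c * u ^ 2) * u ^ n) := by
  have hc2 : 0 < c / 2 := by linarith
  have ht := tendsto_rpow_abs_mul_exp_neg_mul_sq_cocompact hc2 (n : ℝ)
  have hev : ∀ᶠ u : ℝ in Filter.cocompact ℝ,
      ‖Real.exp (-c * u ^ 2) * u ^ n‖ ≤ 1 * ‖Real.exp (-(c / 2) * u ^ 2)‖ := by
    filter_upwards [ht.eventually (eventually_le_nhds zero_lt_one)] with u hu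
    have h1 : |u| ^ ((n : ℝ)) = |u| ^ n := Real.rpow_natCast _ _
    rw [h1] at hu
    have h2 : Real.exp (-c * u ^ 2) = Real.exp (-(c / 2) * u ^ 2) * Real.exp (-(c / 2) * u ^ 2) := by
      rw [← Real.exp_add]; ring_nf
    rw [norm_mul, norm_pow, Real.norm_eq_abs, Real.norm_eq_abs, Real.norm_eq_abs,
      Real.abs_exp, Real.abs_exp, h2, one_mul]
    calc Real.exp (-(c / 2) * u ^ 2) * Real.exp (-(c / 2) * u ^ 2) * |u| ^ n
        = (|u| ^ n * Real.exp (-(c / 2) * u ^ 2)) * Real.exp (-(c / 2) * u ^ 2) := by ring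
      _ ≤ 1 * Real.exp (-(c / 2) * u ^ 2) :=
          mul_le_mul_of_nonneg_right hu (Real.exp_pos _).le
      _ = Real.exp (-(c / 2) * u ^ 2) := one_mul _
  have hcont : Continuous fun u : ℝ => Real.exp (-c * u ^ 2) * u ^ n := by fun_prop
  exact hcont.locallyIntegrable.integrable_of_isBigO_cocompact
    (Asymptotics.isBigO_iff.mpr ⟨1, hev⟩)
    ((integrable_exp_neg_mul_sq hc2).integrableAtFilter _)

open Filter Asymptotics Real Set in
lemma gauss_abs_pow_core {c : ℝ} (hc : 0 < c) {a b : ℝ} (ha : 0 < a) (hb : 0 < b)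
    {q : ℕ} (hq : Odd q) :
    ∫ u : ℝ, Real.exp (-c * u ^ 2) * |a * u + b| ^ q =
      2 * ((∑ k ∈ (Finset.range (q + 1)).filter (fun k => ¬ Even k),
              (q.choose k : ℝ) * a ^ k * b ^ (q - k) *
                ∫ u in Set.Ioi (b / a), Real.exp (-c * u ^ 2) * u ^ k) +
           (∑ k ∈ (Finset.range (q + 1)).filter (fun k => Even k),
              (q.choose k : ℝ) * a ^ k * b ^ (q - k) *
                ∫ u in (0:ℝ)..(b / a), Real.exp (-c * u ^ 2) * u ^ k)) := by
  set s := b / a with hs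
  have hs' : 0 < s := div_pos hb ha
  have hsb : a * s = b := by rw [hs]; field_simp
  -- binomial expansions as function identities
  have hexp : (fun u : ℝ => Real.exp (-c * u ^ 2) * (a * u + b) ^ q)
      = fun u : ℝ => ∑ k ∈ Finset.range (q + 1),
          ((q.choose k : ℝ) * a ^ k * b ^ (q - k)) * (Real.exp (-c * u ^ 2) * u ^ k) := by
    funext u
    rw [add_pow, Finset.mul_sum]
    exact Finset.sum_congr rfl fun k _ => by ring
  have hexpm : (fun u : ℝ => Real.exp (-c * u ^ 2) * (a * u - b) ^ q)
      = fun u : ℝ => ∑ k ∈ Finset.range (q + 1),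
          ((q.choose k : ℝ) * a ^ k * (-b) ^ (q - k)) * (Real.exp (-c * u ^ 2) * u ^ k) := by
    funext u
    rw [show a * u - b = a * u + (-b) by ring, add_pow, Finset.mul_sum]
    exact Finset.sum_congr rfl fun k _ => by ring
  have hG : Integrable (fun u : ℝ => Real.exp (-c * u ^ 2) * (a * u + b) ^ q) := by
    rw [hexp]
    exact integrable_finset_sum _ fun k _ => (integrable_gauss_pow hc k).const_mul _
  have hAbs : Integrable (fun u : ℝ => Real.exp (-c * u ^ 2) * |a * u + b| ^ q) := by
    refine hG.mono ((by fun_prop : Continuous fun u : ℝ =>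
      Real.exp (-c * u ^ 2) * |a * u + b| ^ q).aestronglyMeasurable)
      (Filter.Eventually.of_forall fun u => le_of_eq ?_)
    simp [abs_mul, abs_pow, abs_abs]
  -- split the real line at -s
  have h1 : ∫ u : ℝ, Real.exp (-c * u ^ 2) * |a * u + b| ^ q
      = (∫ u in Set.Iic (-s), Real.exp (-c * u ^ 2) * |a * u + b| ^ q)
        + ∫ u in Set.Ioi (-s), Real.exp (-c * u ^ 2) * |a * u + b| ^ q :=
    (integral_Iic_add_Ioi hAbs.integrableOn hAbs.integrableOn).symm
  -- left piece: reflect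
  have h2 : (∫ u in Set.Iic (-s), Real.exp (-c * u ^ 2) * |a * u + b| ^ q)
      = ∫ u in Set.Ioi s, Real.exp (-c * u ^ 2) * (a * u - b) ^ q := by
    rw [← integral_comp_neg_Ioi]
    refine setIntegral_congr_fun measurableSet_Ioi fun x hx => ?_
    have hx' : s < x := hx
    have hxb : b < a * x := by
      have := (mul_lt_mul_iff_right₀ ha).mpr hx'
      linarith [hsb]
    show Real.exp (-c * (-x) ^ 2) * |a * (-x) + b| ^ q = _
    rw [neg_sq, show |a * (-x) + b| = a * x - b by
      rw [abs_of_nonpos (by nlinarith)]; ring]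
  -- right piece: drop the abs
  have h3 : (∫ u in Set.Ioi (-s), Real.exp (-c * u ^ 2) * |a * u + b| ^ q)
      = ∫ u in Set.Ioi (-s), Real.exp (-c * u ^ 2) * (a * u + b) ^ q := by
    refine setIntegral_congr_fun measurableSet_Ioi fun u hu => ?_
    have hu' : -s < u := hu
    have : 0 < a * u + b := by
      have := (mul_lt_mul_iff_right₀ ha).mpr hu'
      rw [mul_neg, hsb] at this
      linarith
    rw [abs_of_pos this]
  have h4 : (∫ u in Set.Ioi (-s), Real.exp (-c * u ^ 2) * (a * u + b) ^ q)
      = (∫ u in (-s)..s, Real.exp (-c * u ^ 2) * (a * u + b) ^ q)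
        + ∫ u in Set.Ioi s, Real.exp (-c * u ^ 2) * (a * u + b) ^ q := by
    rw [intervalIntegral.integral_of_le (by linarith),
      ← setIntegral_union (Set.Ioc_disjoint_Ioi le_rfl) measurableSet_Ioi
        hG.integrableOn hG.integrableOn,
      Set.Ioc_union_Ioi_eq_Ioi (by linarith : -s ≤ s)]
  -- expansions of the three integrals
  have hJp : (∫ u in Set.Ioi s, Real.exp (-c * u ^ 2) * (a * u + b) ^ q)
      = ∑ k ∈ Finset.range (q + 1), ((q.choose k : ℝ) * a ^ k * b ^ (q - k)) *
          ∫ u in Set.Ioi s, Real.exp (-c * u ^ 2) * u ^ k := by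
    rw [hexp, integral_finset_sum _
      fun k _ => ((integrable_gauss_pow hc k).const_mul _).integrableOn]
    exact Finset.sum_congr rfl fun k _ => MeasureTheory.integral_const_mul _ _
  have hJm : (∫ u in Set.Ioi s, Real.exp (-c * u ^ 2) * (a * u - b) ^ q)
      = ∑ k ∈ Finset.range (q + 1), ((q.choose k : ℝ) * a ^ k * (-b) ^ (q - k)) *
          ∫ u in Set.Ioi s, Real.exp (-c * u ^ 2) * u ^ k := by
    rw [hexpm, integral_finset_sum _
      fun k _ => ((integrable_gauss_pow hc k).const_mul _).integrableOn]
    exact Finset.sum_congr rfl fun k _ => MeasureTheory.integral_const_mul _ _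
  have hK : (∫ u in (-s)..s, Real.exp (-c * u ^ 2) * (a * u + b) ^ q)
      = ∑ k ∈ Finset.range (q + 1), ((q.choose k : ℝ) * a ^ k * b ^ (q - k)) *
          ((1 + (-1 : ℝ) ^ k) * ∫ u in (0:ℝ)..s, Real.exp (-c * u ^ 2) * u ^ k) := by
    rw [hexp, intervalIntegral.integral_finset_sum
      fun k _ => ((integrable_gauss_pow hc k).const_mul _).intervalIntegrable]
    refine Finset.sum_congr rfl fun k _ => ?_
    rw [intervalIntegral.integral_const_mul]
    congr 1
    -- symmetric interval
    have hii : ∀ x y : ℝ, IntervalIntegrable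
        (fun u : ℝ => Real.exp (-c * u ^ 2) * u ^ k) volume x y :=
      fun x y => (integrable_gauss_pow hc k).intervalIntegrable
    rw [← intervalIntegral.integral_add_adjacent_intervals (b := (0:ℝ)) (hii _ _) (hii _ _)]
    have hrefl : (∫ u in (-s)..(0:ℝ), Real.exp (-c * u ^ 2) * u ^ k)
        = (-1 : ℝ) ^ k * ∫ u in (0:ℝ)..s, Real.exp (-c * u ^ 2) * u ^ k := by
      have h := intervalIntegral.integral_comp_neg (a := (0:ℝ)) (b := s)
        (fun u : ℝ => Real.exp (-c * u ^ 2) * u ^ k)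
      rw [neg_zero] at h
      rw [← h, ← intervalIntegral.integral_const_mul]
      refine intervalIntegral.integral_congr fun x _ => ?_
      show Real.exp (-c * (-x) ^ 2) * (-x) ^ k = _
      rw [neg_sq]; ring
    rw [hrefl]; ring
  rw [h1, h2, h3, h4, hJp, hJm, hK]
  -- combine the three sums into one
  rw [← Finset.sum_add_distrib, ← Finset.sum_add_distrib]
  have key : ∀ k ∈ Finset.range (q + 1),
      ((q.choose k : ℝ) * a ^ k * (-b) ^ (q - k)) *
          (∫ u in Set.Ioi s, Real.exp (-c * u ^ 2) * u ^ k)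
        + (((q.choose k : ℝ) * a ^ k * b ^ (q - k)) *
            ((1 + (-1 : ℝ) ^ k) * ∫ u in (0:ℝ)..s, Real.exp (-c * u ^ 2) * u ^ k)
          + ((q.choose k : ℝ) * a ^ k * b ^ (q - k)) *
            (∫ u in Set.Ioi s, Real.exp (-c * u ^ 2) * u ^ k))
      = if Even k then
          2 * ((q.choose k : ℝ) * a ^ k * b ^ (q - k) *
            ∫ u in (0:ℝ)..s, Real.exp (-c * u ^ 2) * u ^ k)
        else
          2 * ((q.choose k : ℝ) * a ^ k * b ^ (q - k) *
            ∫ u in Set.Ioi s, Real.exp (-c * u ^ 2) * u ^ k) := by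
    intro k hk
    have hkq : k ≤ q := by
      simpa using Nat.lt_succ_iff.mp (Finset.mem_range.mp hk)
    by_cases hke : Even k
    · have h1 : (-1 : ℝ) ^ k = 1 := hke.neg_one_pow
      have h2 : Odd (q - k) := Nat.Odd.sub_even hkq hq hke
      have h3 : (-b) ^ (q - k) = -(b ^ (q - k)) := h2.neg_pow b
      rw [if_pos hke, h1, h3]; ring
    · have hko : Odd k := Nat.not_even_iff_odd.mp hke
      have h1 : (-1 : ℝ) ^ k = -1 := hko.neg_one_pow
      have h2 : Even (q - k) := Nat.Odd.sub_odd hq hko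
      have h3 : (-b) ^ (q - k) = b ^ (q - k) := h2.neg_pow b
      rw [if_neg hke, h1, h3]; ring
  rw [Finset.sum_congr rfl key, Finset.sum_ite, ← Finset.mul_sum, ← Finset.mul_sum]
  ring

/-- Even-`p` normal-ratio density integral, case `b > 0`: for even `p ≥ 2`, `M > 0`,
`b = -K/(2M) > 0`, `a = L/M - K²/(4M²) > 0`,
`∫ e^{-½M(z² + (K/M)z + L/M)} |z|^{p-1} dz
  = 2a e^{-½Ma} [ Σ_{i=1}^{p/2} C(p-1, p-2i) a^{2i-1} b^{p-2i} ∫_{b/a}^∞ e^{-½Ma²u²} u^{2i-1} du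
    + Σ_{i=0}^{(p-2)/2} C(p-1, p-1-2i) a^{2i} b^{p-1-2i} ∫_0^{b/a} e^{-½Ma²u²} u^{2i} du ]`. -/
theorem normal_ratio_density_even_pos (p : ℕ) (hp : 2 ≤ p) (heven : Even p)
    (M K L b a : ℝ) (hM : 0 < M)
    (hb : b = -K / (2 * M)) (ha : a = L / M - K ^ 2 / (4 * M ^ 2))
    (ha' : 0 < a) (hb' : 0 < b) :
    ∫ z : ℝ, Real.exp (-(1 / 2) * M * (z ^ 2 + (K / M) * z + L / M)) * |z| ^ (p - 1) =
      2 * a * Real.exp (-(1 / 2) * M * a) *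
        ((∑ i ∈ Finset.Icc 1 (p / 2),
            (Nat.choose (p - 1) (p - 2 * i) : ℝ) * a ^ (2 * i - 1) * b ^ (p - 2 * i) *
              ∫ u in Set.Ioi (b / a),
                Real.exp (-(1 / 2) * M * a ^ 2 * u ^ 2) * u ^ (2 * i - 1)) +
          ∑ i ∈ Finset.range ((p - 2) / 2 + 1),
            (Nat.choose (p - 1) (p - 1 - 2 * i) : ℝ) * a ^ (2 * i) * b ^ (p - 1 - 2 * i) *
              ∫ u in (0 : ℝ)..(b / a),
                Real.exp (-(1 / 2) * M * a ^ 2 * u ^ 2) * u ^ (2 * i)) := by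
  obtain ⟨m, hm⟩ := heven
  have hM0 : M ≠ 0 := ne_of_gt hM
  have ha0 : a ≠ 0 := ne_of_gt ha'
  have hq : Odd (p - 1) := ⟨m - 1, by omega⟩
  have hc : (0 : ℝ) < 1 / 2 * M * a ^ 2 := by positivity
  -- step 1: complete the square in the exponent
  have step1 : ∀ z : ℝ,
      Real.exp (-(1 / 2) * M * (z ^ 2 + (K / M) * z + L / M)) * |z| ^ (p - 1)
      = Real.exp (-(1 / 2) * M * a) *
          (Real.exp (-(1 / 2 * M) * (z - b) ^ 2) * |z| ^ (p - 1)) := by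
    intro z
    have hid : -(1 / 2) * M * (z ^ 2 + K / M * z + L / M)
        = -(1 / 2) * M * a + -(1 / 2 * M) * (z - b) ^ 2 := by
      rw [hb, ha]; field_simp; ring
    rw [hid, Real.exp_add, mul_assoc]
  simp_rw [step1]
  rw [MeasureTheory.integral_const_mul]
  -- step 2: change of variables z = a*u + b
  have h2 : (∫ y : ℝ, Real.exp (-(1 / 2 * M) * y ^ 2) * |y + b| ^ (p - 1))
      = ∫ z : ℝ, Real.exp (-(1 / 2 * M) * (z - b) ^ 2) * |z| ^ (p - 1) := by
    have hfg : (fun y : ℝ => Real.exp (-(1 / 2 * M) * y ^ 2) * |y + b| ^ (p - 1))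
        = fun y : ℝ => (fun z : ℝ =>
            Real.exp (-(1 / 2 * M) * (z - b) ^ 2) * |z| ^ (p - 1)) (y + b) := by
      funext y; simp only [add_sub_cancel_right]
    rw [hfg]
    exact MeasureTheory.integral_add_right_eq_self (μ := volume)
      (fun z : ℝ => Real.exp (-(1 / 2 * M) * (z - b) ^ 2) * |z| ^ (p - 1)) b
  have step2 : (∫ z : ℝ, Real.exp (-(1 / 2 * M) * (z - b) ^ 2) * |z| ^ (p - 1))
      = a * ∫ u : ℝ, Real.exp (-(1 / 2 * M * a ^ 2) * u ^ 2) * |a * u + b| ^ (p - 1) := by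
    have h := MeasureTheory.Measure.integral_comp_mul_left
      (fun y : ℝ => Real.exp (-(1 / 2 * M) * y ^ 2) * |y + b| ^ (p - 1)) a
    have hfax : (fun u : ℝ =>
          Real.exp (-(1 / 2 * M * a ^ 2) * u ^ 2) * |a * u + b| ^ (p - 1))
        = fun x : ℝ => (fun y : ℝ =>
            Real.exp (-(1 / 2 * M) * y ^ 2) * |y + b| ^ (p - 1)) (a * x) := by
      funext x; simp only []; congr 2; ring
    rw [hfax, h, ← h2, smul_eq_mul, abs_inv, abs_of_pos ha', ← mul_assoc,
      mul_inv_cancel₀ ha0, one_mul]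
  rw [step2, gauss_abs_pow_core hc ha' hb' hq]
  -- normalize the exponential in the goal's right-hand side
  simp_rw [show ∀ u : ℝ, -(1 / 2) * M * a ^ 2 * u ^ 2 = -(1 / 2 * M * a ^ 2) * u ^ 2
    from fun u => by ring]
  -- reindex the two sums
  have hS1 : (∑ i ∈ Finset.Icc 1 (p / 2),
        (Nat.choose (p - 1) (p - 2 * i) : ℝ) * a ^ (2 * i - 1) * b ^ (p - 2 * i) *
          ∫ u in Set.Ioi (b / a), Real.exp (-(1 / 2 * M * a ^ 2) * u ^ 2) * u ^ (2 * i - 1))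
      = ∑ k ∈ (Finset.range (p - 1 + 1)).filter (fun k => ¬ Even k),
          ((p - 1).choose k : ℝ) * a ^ k * b ^ (p - 1 - k) *
            ∫ u in Set.Ioi (b / a), Real.exp (-(1 / 2 * M * a ^ 2) * u ^ 2) * u ^ k := by
    refine Finset.sum_nbij' (fun i => 2 * i - 1) (fun k => (k + 1) / 2) ?_ ?_ ?_ ?_ ?_
    · intro i hi
      simp only [Finset.mem_Icc] at hi
      simp only [Finset.mem_filter, Finset.mem_range, Nat.even_iff]
      omega
    · intro k hk
      simp only [Finset.mem_filter, Finset.mem_range, Nat.even_iff] at hk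
      simp only [Finset.mem_Icc]
      omega
    · intro i hi
      simp only [Finset.mem_Icc] at hi
      omega
    · intro k hk
      simp only [Finset.mem_filter, Finset.mem_range, Nat.even_iff] at hk
      omega
    · intro i hi
      simp only [Finset.mem_Icc] at hi
      have e1 : p - 2 * i = p - 1 - (2 * i - 1) := by omega
      have e2 : (p - 1).choose (p - 2 * i) = (p - 1).choose (2 * i - 1) := by
        rw [e1]; exact Nat.choose_symm (by omega)
      rw [e2, e1]
  have hS2 : (∑ i ∈ Finset.range ((p - 2) / 2 + 1),
        (Nat.choose (p - 1) (p - 1 - 2 * i) : ℝ) * a ^ (2 * i) * b ^ (p - 1 - 2 * i) *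
          ∫ u in (0 : ℝ)..(b / a), Real.exp (-(1 / 2 * M * a ^ 2) * u ^ 2) * u ^ (2 * i))
      = ∑ k ∈ (Finset.range (p - 1 + 1)).filter (fun k => Even k),
          ((p - 1).choose k : ℝ) * a ^ k * b ^ (p - 1 - k) *
            ∫ u in (0 : ℝ)..(b / a), Real.exp (-(1 / 2 * M * a ^ 2) * u ^ 2) * u ^ k := by
    refine Finset.sum_nbij' (fun i => 2 * i) (fun k => k / 2) ?_ ?_ ?_ ?_ ?_
    · intro i hi
      simp only [Finset.mem_range] at hi
      simp only [Finset.mem_filter, Finset.mem_range, Nat.even_iff]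
      omega
    · intro k hk
      simp only [Finset.mem_filter, Finset.mem_range, Nat.even_iff] at hk
      simp only [Finset.mem_range]
      omega
    · intro i hi; omega
    · intro k hk
      simp only [Finset.mem_filter, Finset.mem_range, Nat.even_iff] at hk
      omega
    · intro i hi
      have e2 : (p - 1).choose (p - 1 - 2 * i) = (p - 1).choose (2 * i) := by
        simp only [Finset.mem_range] at hi
        exact Nat.choose_symm (by omega)
      rw [e2]
  rw [hS1, hS2]
  ring
end
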